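/- Every edge-colored graph (G,c) admits a spanning subgraph F ⊆ G such that (F, c|_{E(F)}) is edge-minimal (contains no monochromatic path on three edges) and color-degree preserving: d^{c_F}_F(v) = d^c_G(v) for every vertex v. -/
import Mathlib


/-- Every edge-colored graph `(G, c)` admits a spanning subgraph `F`
that is edge-minimal (no monochromatic path on three edges) and preserves the color
degree of every vertex. -/
theorem stmt_18 {V : Type*} [Fintype V] (G : SimpleGraph V) (c : Sym2 V → ℕ) :
    ∃ F : SimpleGraph V, F ≤ G ∧
      (∀ a b x y : V, F.Adj a b → F.Adj b x → F.Adj x y →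
        a ≠ x → b ≠ y → a ≠ y →
        ¬ (c s(a, b) = c s(b, x) ∧ c s(b, x) = c s(x, y))) ∧
      (∀ v : V, ((fun w => c s(v, w)) '' (F.neighborSet v)).ncard
        = ((fun w => c s(v, w)) '' (G.neighborSet v)).ncard) := by
  classical
  let P : SimpleGraph V → Prop := fun F => F ≤ G ∧
    ∀ v : V, (fun w => c s(v, w)) '' (F.neighborSet v)
      = (fun w => c s(v, w)) '' (G.neighborSet v)
  have hq : ∃ n : ℕ, ∃ F, P F ∧ F.edgeSet.ncard = n :=
    ⟨G.edgeSet.ncard, G, ⟨le_refl G, fun v => rfl⟩, rfl⟩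
  obtain ⟨F, hPF, hcard⟩ := Nat.find_spec hq
  refine ⟨F, hPF.1, ?_, fun v => congrArg Set.ncard (hPF.2 v)⟩
  rintro a b x y hab hbx hxy hax hby hay ⟨h1, h2⟩
  have hbnex : b ≠ x := hbx.ne
  set F' := F.deleteEdges {s(b, x)} with hF'
  have hadj : ∀ u w, F'.Adj u w ↔ F.Adj u w ∧ s(u, w) ≠ s(b, x) := by
    intro u w
    simp [hF', SimpleGraph.deleteEdges_adj]
  have hPF' : P F' := by
    refine ⟨le_trans (SimpleGraph.deleteEdges_le _) hPF.1, fun v => ?_⟩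
    rw [← hPF.2 v]
    apply Set.Subset.antisymm
    · rintro t ⟨w, hw, hwt⟩
      exact ⟨w, ((hadj v w).1 hw).1, hwt⟩
    · rintro t ⟨w, hw, hwt⟩
      by_cases hs : s(v, w) = s(b, x)
      · rcases Sym2.eq_iff.1 hs with ⟨hv, hw'⟩ | ⟨hv, hw'⟩
        · subst hv; subst hw'
          refine ⟨a, (hadj v a).2 ⟨hab.symm, ?_⟩, ?_⟩
          · intro h
            rcases Sym2.eq_iff.1 h with ⟨_, h2'⟩ | ⟨h1', _⟩
            · exact hax h2'
            · exact hbnex h1'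
          · rw [← hwt]
            show c s(v, a) = c s(v, w)
            have hsw : s(v, a) = s(a, v) := Sym2.eq_swap
            rw [hsw]; exact h1
        · subst hv; subst hw'
          refine ⟨y, (hadj v y).2 ⟨hxy, ?_⟩, ?_⟩
          · intro h
            rcases Sym2.eq_iff.1 h with ⟨h1', _⟩ | ⟨_, h2'⟩
            · exact hbnex h1'.symm
            · exact hby h2'.symm
          · rw [← hwt]
            show c s(v, y) = c s(v, w)
            have hsw : s(v, w) = s(w, v) := Sym2.eq_swap
            rw [hsw]; exact h2.symm
      · exact ⟨w, (hadj v w).2 ⟨hw, hs⟩, hwt⟩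
  have hmem : s(b, x) ∈ F.edgeSet := hbx
  have hlt : F'.edgeSet.ncard < Nat.find hq := by
    have hes : F'.edgeSet = F.edgeSet \ {s(b, x)} := by
      simp [hF', SimpleGraph.edgeSet_deleteEdges]
    rw [hes, ← hcard]
    exact Set.ncard_diff_singleton_lt_of_mem hmem F.edgeSet.toFinite
  exact Nat.find_min hq hlt ⟨F', hPF', rfl⟩
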